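/- There exists an absolute constant C > 0 with the following property. Let X be a set, μ a distribution on X, f* : X → [0,1], and let (x_i, y_i), i = 1,…,n, be i.i.d. with x_i ~ μ, y_i ∈ [0,1], and E[y_i | x_i] = f*(x_i). Let F be a finite class of functions from X to [0,1]. Then for any δ ∈ (0,1], with probability at least 1 − δ, simultaneously for every f ∈ F: n · E_{x~μ}[ (f(x) − f*(x))² ] ≤ C · ( Σ_{i=1}^n (f(x_i) − y_i)² − Σ_{i=1}^n (f*(x_i) − y_i)² + log(|F|/δ) ). -/

import Mathlib

open MeasureTheory Finset Real ProbabilityTheory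
open scoped ENNReal

namespace RegressionAux

lemma bern_hoeff {p : ℝ} (hp0 : 0 ≤ p) (hp1 : p ≤ 1) (s : ℝ) :
    (1 - p) * Real.exp (-(s * p)) + p * Real.exp (s * (1 - p)) ≤ Real.exp (s ^ 2 / 8) := by
  have hd : ∀ x : ℝ, 0 < 1 - p + p * Real.exp x := by
    intro x
    rcases eq_or_lt_of_le hp0 with h | h
    · simp [← h]
    · have := Real.exp_pos x
      nlinarith
  set g : ℝ → ℝ := fun x => x * p + x ^ 2 / 8 - Real.log (1 - p + p * Real.exp x) with hg_def
  set G1 : ℝ → ℝ := fun x => p + x / 4 - p * Real.exp x / (1 - p + p * Real.exp x) with hG1_def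
  set G2 : ℝ → ℝ := fun x =>
    1 / 4 - (1 - p) * (p * Real.exp x) / (1 - p + p * Real.exp x) ^ 2 with hG2_def
  have hden : ∀ x : ℝ, HasDerivAt (fun y => 1 - p + p * Real.exp y) (p * Real.exp x) x := by
    intro x
    exact ((hasDerivAt_const x (1 - p)).add ((Real.hasDerivAt_exp x).const_mul p)).congr_deriv (zero_add _)
  have hg : ∀ x : ℝ, HasDerivAt g (G1 x) x := by
    intro x
    have h1 : HasDerivAt (fun y : ℝ => y * p) p x := by
      simpa using (hasDerivAt_id x).mul_const p
    have h2 : HasDerivAt (fun y : ℝ => y ^ 2 / 8) (x / 4) x := by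
      have := (hasDerivAt_pow 2 x).div_const 8
      refine this.congr_deriv ?_
      push_cast
      ring
    have h3 : HasDerivAt (fun y => Real.log (1 - p + p * Real.exp y))
        (p * Real.exp x / (1 - p + p * Real.exp x)) x := by
      have := (Real.hasDerivAt_log (ne_of_gt (hd x))).comp x (hden x)
      refine this.congr_deriv ?_
      rw [div_eq_inv_mul]
    exact (h1.add h2).sub h3
  have hG1 : ∀ x : ℝ, HasDerivAt G1 (G2 x) x := by
    intro x
    have h1 : HasDerivAt (fun y : ℝ => p + y / 4) (1 / 4) x := by
      exact ((hasDerivAt_const x p).add ((hasDerivAt_id x).div_const 4)).congr_deriv (zero_add _)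
    have hnum : HasDerivAt (fun y => p * Real.exp y) (p * Real.exp x) x :=
      (Real.hasDerivAt_exp x).const_mul p
    have h2 : HasDerivAt (fun y => p * Real.exp y / (1 - p + p * Real.exp y))
        ((1 - p) * (p * Real.exp x) / (1 - p + p * Real.exp x) ^ 2) x := by
      have := hnum.div (hden x) (ne_of_gt (hd x))
      refine (this.congr_deriv ?_ : _)
      ring
    exact h1.sub h2
  have hG2_nonneg : ∀ x : ℝ, 0 ≤ G2 x := by
    intro x
    have hdx := hd x
    have hw : 0 ≤ p * Real.exp x := mul_nonneg hp0 (Real.exp_pos x).le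
    rw [hG2_def]
    rw [sub_nonneg, div_le_div_iff₀ (by positivity) (by norm_num)]
    nlinarith [sq_nonneg (1 - p - p * Real.exp x)]
  have hG1_mono : Monotone G1 :=
    monotone_of_deriv_nonneg (fun x => (hG1 x).differentiableAt) (fun x => by
      rw [(hG1 x).deriv]; exact hG2_nonneg x)
  have hG1_zero : G1 0 = 0 := by
    simp [hG1_def, Real.exp_zero]
  have hg_zero : g 0 = 0 := by
    simp [hg_def, Real.exp_zero]
  have hg_diff : Differentiable ℝ g := fun x => (hg x).differentiableAt
  have hg_nonneg : ∀ x : ℝ, 0 ≤ g x := by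
    intro x
    rcases le_total 0 x with hx | hx
    · have hmono : MonotoneOn g (Set.Ici (0 : ℝ)) := by
        refine monotoneOn_of_deriv_nonneg (convex_Ici 0) hg_diff.continuous.continuousOn
          hg_diff.differentiableOn ?_
        intro y hy
        rw [interior_Ici] at hy
        rw [(hg y).deriv]
        have : G1 0 ≤ G1 y := hG1_mono (le_of_lt hy)
        linarith [hG1_zero ▸ this]
      have := hmono Set.self_mem_Ici (Set.mem_Ici.2 hx) hx
      linarith [hg_zero ▸ this]
    · have hanti : AntitoneOn g (Set.Iic (0 : ℝ)) := by
        refine antitoneOn_of_deriv_nonpos (convex_Iic 0) hg_diff.continuous.continuousOn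
          hg_diff.differentiableOn ?_
        intro y hy
        rw [interior_Iic] at hy
        rw [(hg y).deriv]
        have : G1 y ≤ G1 0 := hG1_mono (le_of_lt hy)
        linarith [hG1_zero ▸ this]
      have := hanti (Set.mem_Iic.2 hx) Set.self_mem_Iic hx
      linarith [hg_zero ▸ this]
  -- conclude
  have hlog : Real.log (1 - p + p * Real.exp s) ≤ s * p + s ^ 2 / 8 := by
    have := hg_nonneg s
    rw [hg_def] at this
    simp only at this
    linarith
  have hle : 1 - p + p * Real.exp s ≤ Real.exp (s * p + s ^ 2 / 8) :=
    (Real.log_le_iff_le_exp (hd s)).1 hlog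
  have hexp : (1 - p) * Real.exp (-(s * p)) + p * Real.exp (s * (1 - p))
      = Real.exp (-(s * p)) * (1 - p + p * Real.exp s) := by
    rw [show s * (1 - p) = -(s * p) + s by ring, Real.exp_add]
    ring
  rw [hexp]
  calc Real.exp (-(s * p)) * (1 - p + p * Real.exp s)
      ≤ Real.exp (-(s * p)) * Real.exp (s * p + s ^ 2 / 8) := by
        exact mul_le_mul_of_nonneg_left hle (Real.exp_pos _).le
    _ = Real.exp (s ^ 2 / 8) := by
        rw [← Real.exp_add]; ring_nf


lemma exp_chord {y : ℝ} (hy0 : 0 ≤ y) (hy1 : y ≤ 1) (a b : ℝ) :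
    Real.exp (a + b * y) ≤ (1 - y) * Real.exp a + y * Real.exp (a + b) := by
  have := convexOn_exp.2 (Set.mem_univ a) (Set.mem_univ (a + b))
    (by linarith : (0:ℝ) ≤ 1 - y) hy0 (by ring)
  simpa [smul_eq_mul, show (1 - y) * a + y * (a + b) = a + b * y by ring] using this

/-- Key one-dimensional bound: if `κ0` is a probability measure on `ℝ` supported a.s. on
`[0,1]` with mean `m`, then for any `t`, `∫ exp((m-y)² - (t-y)²) dκ0 ≤ exp(-(t-m)²/2)`. -/
lemma key_dim_one (κ0 : Measure ℝ) [IsProbabilityMeasure κ0]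
    (hy : ∀ᵐ y ∂κ0, y ∈ Set.Icc (0:ℝ) 1) {m : ℝ} (hm : ∫ y, y ∂κ0 = m)
    (hm0 : 0 ≤ m) (hm1 : m ≤ 1) (t u : ℝ) (hut : u ≤ (t - m) ^ 2) :
    ∫⁻ y, ENNReal.ofReal (Real.exp ((m - y) ^ 2 - (t - y) ^ 2)) ∂κ0
      ≤ ENNReal.ofReal (Real.exp (-u / 2)) := by
  set a : ℝ := m ^ 2 - t ^ 2 with ha_def
  set b : ℝ := 2 * (t - m) with hb_def
  have hid : ∀ y : ℝ, (m - y) ^ 2 - (t - y) ^ 2 = a + b * y := by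
    intro y; rw [ha_def, hb_def]; ring
  -- integrability of y
  have hy_int : Integrable (fun y : ℝ => y) κ0 := by
    refine Integrable.mono' (integrable_const 1) measurable_id.aestronglyMeasurable ?_
    filter_upwards [hy] with y hy'
    rw [Real.norm_eq_abs, abs_le]
    exact ⟨by linarith [hy'.1], hy'.2⟩
  set f : ℝ → ℝ := fun y => Real.exp a + (Real.exp (a + b) - Real.exp a) * y with hf_def
  have hf_int : Integrable f κ0 := by
    exact (integrable_const (Real.exp a)).add (hy_int.const_mul _)
  have hf_nn : 0 ≤ᵐ[κ0] f := by
    filter_upwards [hy] with y hy'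
    have h1 : (0:ℝ) ≤ (1 - y) * Real.exp a := mul_nonneg (by linarith [hy'.2]) (Real.exp_pos _).le
    have h2 : (0:ℝ) ≤ y * Real.exp (a + b) := mul_nonneg hy'.1 (Real.exp_pos _).le
    rw [hf_def]
    simp only [Pi.zero_apply]
    nlinarith
  have step1 : ∫⁻ y, ENNReal.ofReal (Real.exp ((m - y) ^ 2 - (t - y) ^ 2)) ∂κ0
      ≤ ∫⁻ y, ENNReal.ofReal (f y) ∂κ0 := by
    refine lintegral_mono_ae ?_
    filter_upwards [hy] with y hy'
    refine ENNReal.ofReal_le_ofReal ?_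
    rw [hid y]
    calc Real.exp (a + b * y) ≤ (1 - y) * Real.exp a + y * Real.exp (a + b) :=
          exp_chord hy'.1 hy'.2 a b
      _ = f y := by rw [hf_def]; ring
  have step2 : ∫⁻ y, ENNReal.ofReal (f y) ∂κ0 = ENNReal.ofReal (∫ y, f y ∂κ0) :=
    (ofReal_integral_eq_lintegral_ofReal hf_int hf_nn).symm
  have step3 : ∫ y, f y ∂κ0 = (1 - m) * Real.exp a + m * Real.exp (a + b) := by
    rw [hf_def]
    simp only
    rw [integral_add (integrable_const _) (hy_int.const_mul _), integral_const,
      integral_const_mul, hm]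
    simp [measure_univ]
    ring
  have step4 : (1 - m) * Real.exp a + m * Real.exp (a + b) ≤ Real.exp (-(t - m) ^ 2 / 2) := by
    set s : ℝ := 2 * (t - m) with hs_def
    have e1 : a = -(t - m) ^ 2 + -(s * m) := by rw [ha_def, hs_def]; ring
    have e2 : a + b = -(t - m) ^ 2 + s * (1 - m) := by rw [ha_def, hb_def, hs_def]; ring
    have hbh := bern_hoeff hm0 hm1 s
    calc (1 - m) * Real.exp a + m * Real.exp (a + b)
        = Real.exp (-(t - m) ^ 2) *
            ((1 - m) * Real.exp (-(s * m)) + m * Real.exp (s * (1 - m))) := by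
          rw [e2, e1, Real.exp_add, Real.exp_add]; ring
      _ ≤ Real.exp (-(t - m) ^ 2) * Real.exp (s ^ 2 / 8) :=
          mul_le_mul_of_nonneg_left hbh (Real.exp_pos _).le
      _ = Real.exp (-(t - m) ^ 2 / 2) := by
          rw [← Real.exp_add]
          congr 1
          rw [hs_def]
          ring
  calc ∫⁻ y, ENNReal.ofReal (Real.exp ((m - y) ^ 2 - (t - y) ^ 2)) ∂κ0
      ≤ ∫⁻ y, ENNReal.ofReal (f y) ∂κ0 := step1
    _ = ENNReal.ofReal (∫ y, f y ∂κ0) := step2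
    _ ≤ ENNReal.ofReal (Real.exp (-u / 2)) := by
        rw [step3]
        refine ENNReal.ofReal_le_ofReal (step4.trans (Real.exp_le_exp.2 (by linarith)))

lemma core {X : Type} [mX : MeasurableSpace X] (μ : Measure X) [IsProbabilityMeasure μ]
    (κ : Kernel X ℝ) [IsMarkovKernel κ]
    {ι : Type} [Fintype ι] (t : ι → X → ℝ) (p : X → ℝ) (u : ι → X → ℝ)
    (hu_meas : ∀ i, Measurable (u i))
    (hu0 : ∀ i x, 0 ≤ u i x)
    (X₀ : Set X) (hX₀m : MeasurableSet X₀) (hX₀ : μ X₀ᶜ = 0)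
    (hmean : ∀ x ∈ X₀, ∫ y, y ∂(κ x) = p x)
    (hp0 : ∀ x ∈ X₀, 0 ≤ p x) (hp1 : ∀ x ∈ X₀, p x ≤ 1)
    (hy01 : ∀ x ∈ X₀, ∀ᵐ y ∂(κ x), y ∈ Set.Icc (0:ℝ) 1)
    (hut : ∀ i, ∀ x ∈ X₀, u i x ≤ (t i x - p x) ^ 2) :
    ∀ (n : ℕ) (c : ι → ℝ) (N : Set (Fin n → X × ℝ)), MeasurableSet N →
      (∀ d ∈ N, (∀ j, (d j).1 ∈ X₀) →
        ∃ i, (∑ j, ((t i (d j).1 - (d j).2) ^ 2 - (p (d j).1 - (d j).2) ^ 2)) < c i) →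
      (Measure.pi fun _ : Fin n => μ ⊗ₘ κ) N
        ≤ ∑ i, ENNReal.ofReal (Real.exp (c i) * (∫ x, Real.exp (-u i x / 2) ∂μ) ^ n) := by
  have hJ0 : ∀ i, 0 ≤ ∫ x, Real.exp (-u i x / 2) ∂μ := by
    intro i
    exact integral_nonneg fun x => (Real.exp_pos _).le
  have hJint : ∀ i, Integrable (fun x => Real.exp (-u i x / 2)) μ := by
    intro i
    refine Integrable.mono' (integrable_const 1) ?_ ?_
    · exact ((hu_meas i).neg.div_const 2).exp.aestronglyMeasurable
    · refine Filter.Eventually.of_forall fun x => ?_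
      rw [Real.norm_eq_abs, abs_of_pos (Real.exp_pos _)]
      exact Real.exp_le_one_iff.2 (by have := hu0 i x; linarith)
  intro n
  induction n with
  | zero =>
    intro c N hNm hN
    rcases Set.eq_empty_or_nonempty N with h | ⟨d, hd⟩
    · simp [h]
    · have hex : ∃ i, 0 < c i := by
        obtain ⟨i, hi⟩ := hN d hd (fun j => j.elim0)
        exact ⟨i, by simpa using hi⟩
      obtain ⟨i, hi⟩ := hex
      have h1 : (Measure.pi fun _ : Fin 0 => μ ⊗ₘ κ) N ≤ 1 := prob_le_one
      refine h1.trans ?_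
      have : (1:ℝ≥0∞) ≤ ENNReal.ofReal (Real.exp (c i) * (∫ x, Real.exp (-u i x / 2) ∂μ) ^ 0) := by
        rw [pow_zero, mul_one]
        rw [ENNReal.one_le_ofReal]
        exact Real.one_le_exp hi.le
      refine this.trans ?_
      exact Finset.single_le_sum (f := fun i => ENNReal.ofReal
        (Real.exp (c i) * (∫ x, Real.exp (-u i x / 2) ∂μ) ^ 0))
        (fun j _ => zero_le) (Finset.mem_univ i)
  | succ n IH =>
    intro c N hNm hN
    set ν : Measure (X × ℝ) := μ ⊗ₘ κ with hν_def
    have hmp := measurePreserving_piFinSuccAbove (fun _ : Fin (n + 1) => ν) 0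
    set e := MeasurableEquiv.piFinSuccAbove (fun _ : Fin (n + 1) => X × ℝ) 0 with he_def
    set M' : Set ((X × ℝ) × (Fin n → X × ℝ)) := e.symm ⁻¹' N with hM'_def
    have hM'm : MeasurableSet M' := e.symm.measurable hNm
    have hPQ : (Measure.pi fun _ : Fin (n+1) => ν) N
        = (ν.prod (Measure.pi fun _ : Fin n => ν)) M' := by
      rw [← hmp.map_eq, MeasurableEquiv.map_apply]
      congr 1
      rw [hM'_def, ← Set.preimage_comp]
      simp
    set g : (X × ℝ) → ℝ≥0∞ :=
      fun q => (Measure.pi fun _ : Fin n => ν) (Prod.mk q ⁻¹' M') with hg_def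
    have hg_meas : Measurable g := measurable_measure_prodMk_left hM'm
    -- pointwise sections bound
    have hsec : ∀ q : X × ℝ, q.1 ∈ X₀ →
        g q ≤ ∑ i, ENNReal.ofReal
          (Real.exp (c i) * (∫ x, Real.exp (-u i x / 2) ∂μ) ^ n)
          * ENNReal.ofReal (Real.exp ((p q.1 - q.2) ^ 2 - (t i q.1 - q.2) ^ 2)) := by
      intro q hq1
      have happ := IH (fun i => c i - ((t i q.1 - q.2) ^ 2 - (p q.1 - q.2) ^ 2))
        (Prod.mk q ⁻¹' M') (measurable_prodMk_left hM'm) ?_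
      · refine happ.trans (le_of_eq (Finset.sum_congr rfl fun i _ => ?_))
        show ENNReal.ofReal (Real.exp (c i - ((t i q.1 - q.2) ^ 2 - (p q.1 - q.2) ^ 2))
            * (∫ x, Real.exp (-u i x / 2) ∂μ) ^ n) = _
        rw [show c i - ((t i q.1 - q.2) ^ 2 - (p q.1 - q.2) ^ 2)
            = c i + ((p q.1 - q.2) ^ 2 - (t i q.1 - q.2) ^ 2) by ring, Real.exp_add]
        rw [show Real.exp (c i) * Real.exp ((p q.1 - q.2) ^ 2 - (t i q.1 - q.2) ^ 2)
              * (∫ x, Real.exp (-u i x / 2) ∂μ) ^ n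
            = (Real.exp (c i) * (∫ x, Real.exp (-u i x / 2) ∂μ) ^ n)
              * Real.exp ((p q.1 - q.2) ^ 2 - (t i q.1 - q.2) ^ 2) by ring]
        rw [ENNReal.ofReal_mul (by positivity)]
      · intro d' hd' hd'X₀
        have hdN : e.symm (q, d') ∈ N := hd'
        have hcoord0 : e.symm (q, d') 0 = q := by
          simp [he_def, MeasurableEquiv.piFinSuccAbove_symm_apply, Fin.insertNthEquiv,
            Fin.insertNth_apply_same]
        have hcoordS : ∀ j : Fin n, e.symm (q, d') ((0 : Fin (n+1)).succAbove j) = d' j := by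
          intro j
          simp [he_def, MeasurableEquiv.piFinSuccAbove_symm_apply, Fin.insertNthEquiv,
            Fin.insertNth_apply_succAbove]
        have hcoords : ∀ j : Fin (n+1), (e.symm (q, d') j).1 ∈ X₀ := by
          intro j
          refine Fin.cases ?_ ?_ j
          · rw [hcoord0]; exact hq1
          · intro j'
            have hsa : (0 : Fin (n+1)).succAbove j' = j'.succ := rfl
            rw [← hsa, hcoordS j']
            exact hd'X₀ j'
        obtain ⟨i, hi⟩ := hN _ hdN hcoords
        refine ⟨i, ?_⟩
        show ∑ j : Fin n, ((t i (d' j).1 - (d' j).2) ^ 2 - (p (d' j).1 - (d' j).2) ^ 2)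
            < c i - ((t i q.1 - q.2) ^ 2 - (p q.1 - q.2) ^ 2)
        rw [Fin.sum_univ_succAbove _ 0, hcoord0] at hi
        have heq : ∀ j : Fin n,
            (t i (e.symm (q, d') ((0 : Fin (n+1)).succAbove j)).1
                - (e.symm (q, d') ((0 : Fin (n+1)).succAbove j)).2) ^ 2
              - (p (e.symm (q, d') ((0 : Fin (n+1)).succAbove j)).1
                - (e.symm (q, d') ((0 : Fin (n+1)).succAbove j)).2) ^ 2
            = (t i (d' j).1 - (d' j).2) ^ 2 - (p (d' j).1 - (d' j).2) ^ 2 := by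
          intro j; rw [hcoordS j]
        rw [Finset.sum_congr rfl (fun j _ => heq j)] at hi
        linarith
    -- the inner integral bound
    have hinner : ∀ x ∈ X₀, ∫⁻ y, g (x, y) ∂(κ x)
        ≤ ∑ i, ENNReal.ofReal (Real.exp (c i) * (∫ x, Real.exp (-u i x / 2) ∂μ) ^ n)
            * ENNReal.ofReal (Real.exp (-u i x / 2)) := by
      intro x hx
      have step1 : ∫⁻ y, g (x, y) ∂(κ x)
          ≤ ∫⁻ y, ∑ i, ENNReal.ofReal
              (Real.exp (c i) * (∫ x, Real.exp (-u i x / 2) ∂μ) ^ n)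
              * ENNReal.ofReal (Real.exp ((p x - y) ^ 2 - (t i x - y) ^ 2)) ∂(κ x) :=
        lintegral_mono fun y => hsec (x, y) hx
      refine step1.trans ?_
      rw [lintegral_finset_sum]
      · refine Finset.sum_le_sum fun i _ => ?_
        rw [lintegral_const_mul']
        · refine mul_le_mul_right ?_ _
          exact key_dim_one (κ x) (hy01 x hx) (hmean x hx) (hp0 x hx) (hp1 x hx)
            (t i x) (u i x) (hut i x hx)
        · exact ENNReal.ofReal_ne_top
      · intro i _
        refine Measurable.const_mul ?_ _
        refine ENNReal.measurable_ofReal.comp ?_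
        refine Real.measurable_exp.comp ?_
        exact ((measurable_const.sub measurable_id).pow_const 2).sub
          ((measurable_const.sub measurable_id).pow_const 2)
    -- put it together
    have hfst : ∀ᵐ x ∂μ, x ∈ X₀ := by
      rw [ae_iff]
      exact hX₀
    calc (Measure.pi fun _ : Fin (n+1) => ν) N
        = (ν.prod (Measure.pi fun _ : Fin n => ν)) M' := hPQ
      _ = ∫⁻ q, g q ∂ν := Measure.prod_apply hM'm
      _ = ∫⁻ x, ∫⁻ y, g (x, y) ∂(κ x) ∂μ := by
          rw [hν_def, Measure.lintegral_compProd hg_meas]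
      _ ≤ ∫⁻ x, ∑ i, ENNReal.ofReal (Real.exp (c i) * (∫ x, Real.exp (-u i x / 2) ∂μ) ^ n)
            * ENNReal.ofReal (Real.exp (-u i x / 2)) ∂μ := by
          refine lintegral_mono_ae ?_
          filter_upwards [hfst] with x hx
          exact hinner x hx
      _ = ∑ i, ENNReal.ofReal (Real.exp (c i) * (∫ x, Real.exp (-u i x / 2) ∂μ) ^ n)
            * ∫⁻ x, ENNReal.ofReal (Real.exp (-u i x / 2)) ∂μ := by
          rw [lintegral_finset_sum]
          · refine Finset.sum_congr rfl fun i _ => ?_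
            rw [lintegral_const_mul']
            exact ENNReal.ofReal_ne_top
          · intro i _
            exact (ENNReal.measurable_ofReal.comp
              (Real.measurable_exp.comp ((hu_meas i).neg.div_const 2))).const_mul _
      _ = ∑ i, ENNReal.ofReal (Real.exp (c i) * (∫ x, Real.exp (-u i x / 2) ∂μ) ^ (n+1)) := by
          refine Finset.sum_congr rfl fun i _ => ?_
          rw [← ofReal_integral_eq_lintegral_ofReal (hJint i)
            (Filter.Eventually.of_forall fun x => (Real.exp_pos _).le)]
          rw [← ENNReal.ofReal_mul (by positivity)]
          congr 1
          ring

end RegressionAux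


open RegressionAux

theorem regression_uniform_excess_risk_bound :
    ∃ C : ℝ, 0 < C ∧
      ∀ (X : Type) [mX : MeasurableSpace X]
        (μm : Measure X) [IsProbabilityMeasure μm]
        (fstar : X → ℝ), (∀ x, fstar x ∈ Set.Icc (0 : ℝ) 1) →
      ∀ (ν : Measure (X × ℝ)) [IsProbabilityMeasure ν],
        ν.map Prod.fst = μm →
        (∀ᵐ p ∂ν, p.2 ∈ Set.Icc (0 : ℝ) 1) →
        (ν[(fun p : X × ℝ => p.2) | MeasurableSpace.comap Prod.fst mX]
          =ᵐ[ν] fun p : X × ℝ => fstar p.1) →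
      ∀ (n : ℕ) (ι : Type) [Fintype ι]
        (F : ι → X → ℝ),
        (∀ i x, F i x ∈ Set.Icc (0 : ℝ) 1) →
      ∀ (δ : ℝ), δ ∈ Set.Ioc (0 : ℝ) 1 →
      ENNReal.ofReal (1 - δ) ≤
        (Measure.pi fun _ : Fin n => ν)
          {data | ∀ i : ι,
            (n : ℝ) * ∫ x, (F i x - fstar x) ^ 2 ∂μm
              ≤ C * ((∑ j : Fin n, (F i (data j).1 - (data j).2) ^ 2)
                  - (∑ j : Fin n, (fstar (data j).1 - (data j).2) ^ 2)
                  + Real.log ((Fintype.card ι : ℝ) / δ))} := by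
  refine ⟨3, by norm_num, ?_⟩
  intro X mX μm _ fstar hfstar ν _ hmap hy hce n ι _ F hF δ hδ
  -- the good set
  set G : Set (Fin n → X × ℝ) := {data | ∀ i : ι,
      (n : ℝ) * ∫ x, (F i x - fstar x) ^ 2 ∂μm
        ≤ 3 * ((∑ j : Fin n, (F i (data j).1 - (data j).2) ^ 2)
            - (∑ j : Fin n, (fstar (data j).1 - (data j).2) ^ 2)
            + Real.log ((Fintype.card ι : ℝ) / δ))} with hG_def
  rcases isEmpty_or_nonempty ι with hι | hι
  · have hGuniv : G = Set.univ := by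
      ext d; simp [hG_def, hι.forall_iff]
    rw [hGuniv]
    rw [measure_univ]
    exact ENNReal.ofReal_le_one.2 (by linarith [hδ.1])
  -- nonempty case
  have hcard_pos : 0 < (Fintype.card ι : ℝ) := by
    exact_mod_cast Fintype.card_pos
  set L : ℝ := Real.log ((Fintype.card ι : ℝ) / δ) with hL_def
  have hexpL : Real.exp (-L) = δ / (Fintype.card ι : ℝ) := by
    rw [hL_def, Real.exp_neg, Real.exp_log (div_pos hcard_pos hδ.1), inv_div]
  -- integrability of the second coordinate
  have hy_int : Integrable (fun p : X × ℝ => p.2) ν := by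
    refine Integrable.mono' (integrable_const 1) measurable_snd.aestronglyMeasurable ?_
    filter_upwards [hy] with q hq
    rw [Real.norm_eq_abs, abs_le]
    exact ⟨by linarith [hq.1], hq.2⟩
  -- the conditional kernel
  set κ : Kernel X ℝ := ν.condKernel with hκ_def
  have hκcd : condDistrib Prod.snd Prod.fst ν = κ := by
    rw [condDistrib_def, hκ_def]
    congr 1
    rw [show (fun a : X × ℝ => (a.1, a.2)) = id from funext fun _ => rfl, Measure.map_id]
  have hfst : ν.fst = μm := by rw [Measure.fst, hmap]
  have hdis : μm ⊗ₘ κ = ν := by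
    rw [← hfst, hκ_def]
    exact ν.disintegrate ν.condKernel
  -- conditional mean identity
  have hmean_ae : ∀ᵐ q ∂ν, fstar q.1 = ∫ y, y ∂κ q.1 := by
    have h1 := condExp_ae_eq_integral_condDistrib' (μ := ν) (X := Prod.fst)
      (Y := fun p : X × ℝ => p.2) measurable_fst hy_int
    rw [show (fun p : X × ℝ => p.2) = Prod.snd from rfl] at h1
    rw [hκcd] at h1
    exact (hce.symm.trans h1)
  -- transfer machinery
  have transfer : ∀ S : Set (X × ℝ), MeasurableSet S → ν S = 0 →
      ∃ X₁ : Set X, MeasurableSet X₁ ∧ μm X₁ᶜ = 0 ∧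
        ∀ x ∈ X₁, κ x (Prod.mk x ⁻¹' S) = 0 := by
    intro S hSm hS0
    refine ⟨{x | κ x (Prod.mk x ⁻¹' S) = 0}, ?_, ?_, fun x hx => hx⟩
    · exact (Kernel.measurable_kernel_prodMk_left hSm) (measurableSet_singleton 0)
    · have h1 : (μm ⊗ₘ κ) S = ∫⁻ x, κ x (Prod.mk x ⁻¹' S) ∂μm :=
        Measure.compProd_apply hSm
      rw [hdis, hS0] at h1
      have h2 := (lintegral_eq_zero_iff (Kernel.measurable_kernel_prodMk_left hSm)).1 h1.symm
      have h2' : ∀ᵐ x ∂μm, κ x (Prod.mk x ⁻¹' S) = 0 :=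
        h2.mono fun x hx => by simpa using hx
      rw [Set.compl_setOf]
      exact ae_iff.1 h2'
  -- X₁ : mean property
  have hbad1 : ν {q : X × ℝ | ¬ fstar q.1 = ∫ y, y ∂κ q.1} = 0 := ae_iff.1 hmean_ae
  set D1 : Set (X × ℝ) := toMeasurable ν {q : X × ℝ | ¬ fstar q.1 = ∫ y, y ∂κ q.1} with hD1_def
  obtain ⟨X₁, hX₁m, hX₁null, hX₁⟩ := transfer D1 (measurableSet_toMeasurable _ _)
    (by rw [hD1_def, measure_toMeasurable]; exact hbad1)
  have hX₁mean : ∀ x ∈ X₁, ∫ y, y ∂κ x = fstar x := by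
    intro x hx
    by_contra hne
    have hall : Prod.mk x ⁻¹' D1 = Set.univ := by
      ext y
      simp only [Set.mem_preimage, Set.mem_univ, iff_true]
      exact subset_toMeasurable _ _ (by simpa using fun h => hne h.symm)
    have := hX₁ x hx
    rw [hall] at this
    simp at this
  -- X₂ : values in [0,1]
  have hbad2 : ν {q : X × ℝ | ¬ q.2 ∈ Set.Icc (0:ℝ) 1} = 0 := ae_iff.1 hy
  set D2 : Set (X × ℝ) := toMeasurable ν {q : X × ℝ | ¬ q.2 ∈ Set.Icc (0:ℝ) 1} with hD2_def
  obtain ⟨X₂, hX₂m, hX₂null, hX₂⟩ := transfer D2 (measurableSet_toMeasurable _ _)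
    (by rw [hD2_def, measure_toMeasurable]; exact hbad2)
  have hX₂y : ∀ x ∈ X₂, ∀ᵐ y ∂κ x, y ∈ Set.Icc (0:ℝ) 1 := by
    intro x hx
    rw [ae_iff]
    refine measure_mono_null ?_ (hX₂ x hx)
    intro y hy'
    exact subset_toMeasurable _ _ hy'
  -- construction of the measurable surrogates u i
  have hui : ∀ i : ι, ∃ (ui : X → ℝ) (Si : Set X), Measurable ui ∧
      (∀ x, 0 ≤ ui x ∧ ui x ≤ 1) ∧
      (∫ x, ui x ∂μm = ∫ x, (F i x - fstar x) ^ 2 ∂μm) ∧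
      MeasurableSet Si ∧ μm Siᶜ = 0 ∧ ∀ x ∈ Si, ui x ≤ (F i x - fstar x) ^ 2 := by
    intro i
    have hsq01 : ∀ x, 0 ≤ (F i x - fstar x) ^ 2 ∧ (F i x - fstar x) ^ 2 ≤ 1 := by
      intro x
      have h1 := (hF i x).1; have h2 := (hF i x).2
      have h3 := (hfstar x).1; have h4 := (hfstar x).2
      constructor
      · positivity
      · nlinarith
    by_cases hm : AEStronglyMeasurable (fun x => (F i x - fstar x) ^ 2) μm
    · obtain ⟨g, hg_sm, hg_ae⟩ := hm
      set ui : X → ℝ := fun x => max 0 (min 1 (g x)) with hui_def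
      have hui_meas : Measurable ui := by
        exact measurable_const.max (measurable_const.min hg_sm.measurable)
      have haeq : (fun x => (F i x - fstar x) ^ 2) =ᵐ[μm] ui := by
        filter_upwards [hg_ae] with x hx
        rw [hui_def]
        simp only
        rw [← hx, min_eq_right (hsq01 x).2, max_eq_right (hsq01 x).1]
      refine ⟨ui, (toMeasurable μm {x | ¬ ui x = (F i x - fstar x) ^ 2})ᶜ, hui_meas, ?_, ?_,
        (measurableSet_toMeasurable _ _).compl, ?_, ?_⟩
      · intro x
        exact ⟨le_max_left _ _, max_le zero_le_one (min_le_left _ _)⟩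
      · exact (integral_congr_ae haeq).symm
      · rw [compl_compl, measure_toMeasurable]
        exact ae_iff.1 (haeq.mono fun x hx => hx.symm)
      · intro x hx
        have : ¬ x ∈ toMeasurable μm {x | ¬ ui x = (F i x - fstar x) ^ 2} := hx
        have h2 : ui x = (F i x - fstar x) ^ 2 := by
          by_contra hne
          exact this (subset_toMeasurable _ _ hne)
        exact h2.le
    · refine ⟨fun _ => 0, Set.univ, measurable_const,
        fun x => ⟨le_refl 0, zero_le_one⟩, ?_, MeasurableSet.univ, by simp,
        fun x _ => sq_nonneg _⟩
      rw [integral_undef (fun hint => hm hint.1)]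
      simp
  choose u S hu_meas hu01 hu_int hS_meas hS_null hS_le using hui
  -- the full-measure set X₀
  set X₀ : Set X := (X₁ ∩ X₂) ∩ ⋂ i, S i with hX₀_def
  have hX₀m : MeasurableSet X₀ :=
    ((hX₁m.inter hX₂m).inter (MeasurableSet.iInter fun i => hS_meas i))
  have hX₀null : μm X₀ᶜ = 0 := by
    rw [hX₀_def, Set.compl_inter, Set.compl_inter, Set.compl_iInter]
    exact measure_union_null (measure_union_null hX₁null hX₂null)
      (measure_iUnion_null fun i => hS_null i)
  -- apply the core lemma
  set J : ι → ℝ := fun i => ∫ x, Real.exp (-u i x / 2) ∂μm with hJ_def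
  set r : ι → ℝ := fun i => ∫ x, (F i x - fstar x) ^ 2 ∂μm with hr_def
  set B : Set (Fin n → X × ℝ) := toMeasurable (Measure.pi fun _ : Fin n => ν) G with hB_def
  have hBm : MeasurableSet B := measurableSet_toMeasurable _ _
  have hcore := core μm κ (fun i => F i) fstar u hu_meas (fun i x => (hu01 i x).1)
    X₀ hX₀m hX₀null
    (fun x hx => hX₁mean x hx.1.1)
    (fun x _ => (hfstar x).1) (fun x _ => (hfstar x).2)
    (fun x hx => hX₂y x hx.1.2)
    (fun i x hx => hS_le i x (Set.mem_iInter.1 hx.2 i))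
    n (fun i => (n : ℝ) * r i / 3 - L) Bᶜ hBm.compl ?_
  · -- conclude from the core bound
    have hbound : ∀ i : ι, Real.exp ((n : ℝ) * r i / 3 - L) * J i ^ n
        ≤ δ / (Fintype.card ι : ℝ) := by
      intro i
      have hJ0 : 0 ≤ J i := integral_nonneg fun x => (Real.exp_pos _).le
      have hexp_le : ∀ x : X, Real.exp (-u i x / 2) ≤ 1 - u i x / 3 := by
        intro x
        have h01 := hu01 i x
        have hchord : Real.exp (0 + (-(1:ℝ)/2) * u i x)
            ≤ (1 - u i x) * Real.exp 0 + u i x * Real.exp (0 + -(1:ℝ)/2) :=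
          exp_chord h01.1 h01.2 0 (-(1:ℝ)/2)
        have he23 : Real.exp (0 + -(1:ℝ)/2) ≤ 2/3 := by
          rw [zero_add]
          rw [show (-(1:ℝ)/2) = -(1/2) by norm_num, Real.exp_neg]
          rw [inv_le_comm₀ (Real.exp_pos _) (by norm_num)]
          have hsq : Real.exp (1/2 : ℝ) * Real.exp (1/2 : ℝ) = Real.exp 1 := by
            rw [← Real.exp_add]; norm_num
          nlinarith [Real.exp_pos (1/2 : ℝ), Real.exp_one_gt_d9]
        have h1 : Real.exp (0 + (-(1:ℝ)/2) * u i x) = Real.exp (-u i x / 2) := by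
          congr 1; ring
        rw [h1, Real.exp_zero] at hchord
        nlinarith [h01.1, h01.2]
      have hJle : J i ≤ Real.exp (-(∫ x, u i x ∂μm) / 3) := by
        have h1 : J i ≤ 1 - (∫ x, u i x ∂μm) / 3 := by
          rw [hJ_def]
          simp only
          have hint_u : Integrable (fun x => u i x) μm := by
            refine Integrable.mono' (integrable_const 1) (hu_meas i).aestronglyMeasurable ?_
            exact Filter.Eventually.of_forall fun x => by
              rw [Real.norm_eq_abs, abs_le]
              exact ⟨by linarith [(hu01 i x).1], (hu01 i x).2⟩
          have hint_e : Integrable (fun x => Real.exp (-u i x / 2)) μm := by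
            refine Integrable.mono' (integrable_const 1)
              ((hu_meas i).neg.div_const 2).exp.aestronglyMeasurable ?_
            exact Filter.Eventually.of_forall fun x => by
              rw [Real.norm_eq_abs, abs_of_pos (Real.exp_pos _)]
              exact Real.exp_le_one_iff.2 (by linarith [(hu01 i x).1])
          calc ∫ x, Real.exp (-u i x / 2) ∂μm
              ≤ ∫ x, (1 - u i x / 3) ∂μm :=
                integral_mono hint_e ((integrable_const 1).sub (hint_u.div_const 3))
                  fun x => hexp_le x
            _ = 1 - (∫ x, u i x ∂μm) / 3 := by
                rw [integral_sub (integrable_const 1) (hint_u.div_const 3), integral_const]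
                simp [measure_univ]
                rw [integral_div]
        refine h1.trans ?_
        have := Real.add_one_le_exp (-(∫ x, u i x ∂μm) / 3)
        linarith
      calc Real.exp ((n : ℝ) * r i / 3 - L) * J i ^ n
          ≤ Real.exp ((n : ℝ) * r i / 3 - L) * Real.exp (-(∫ x, u i x ∂μm) / 3) ^ n := by
            refine mul_le_mul_of_nonneg_left ?_ (Real.exp_pos _).le
            exact pow_le_pow_left₀ hJ0 hJle n
        _ = Real.exp ((n : ℝ) * r i / 3 - L + (n : ℝ) * (-(∫ x, u i x ∂μm) / 3)) := by
            rw [← Real.exp_nat_mul, ← Real.exp_add]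
        _ = Real.exp (-L) := by
            congr 1
            have : r i = ∫ x, u i x ∂μm := by rw [hr_def]; exact (hu_int i).symm
            rw [this]; ring
        _ = δ / (Fintype.card ι : ℝ) := hexpL
    have hsum : (Measure.pi fun _ : Fin n => ν) Bᶜ ≤ ENNReal.ofReal δ := by
      rw [← hdis]
      refine hcore.trans ?_
      calc ∑ i : ι, ENNReal.ofReal (Real.exp ((n : ℝ) * r i / 3 - L) * J i ^ n)
          ≤ ∑ i : ι, ENNReal.ofReal (δ / (Fintype.card ι : ℝ)) :=
            Finset.sum_le_sum fun i _ => ENNReal.ofReal_le_ofReal (hbound i)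
        _ = (Fintype.card ι : ℝ≥0∞) * ENNReal.ofReal (δ / (Fintype.card ι : ℝ)) := by
            rw [Finset.sum_const, Finset.card_univ, nsmul_eq_mul]
        _ = ENNReal.ofReal δ := by
            rw [← ENNReal.ofReal_natCast, ← ENNReal.ofReal_mul (by positivity)]
            congr 1
            field_simp
    -- final computation
    have hGB : (Measure.pi fun _ : Fin n => ν) G = (Measure.pi fun _ : Fin n => ν) B :=
      (measure_toMeasurable G).symm
    have hB1 : (Measure.pi fun _ : Fin n => ν) B
        = 1 - (Measure.pi fun _ : Fin n => ν) Bᶜ := by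
      rw [prob_compl_eq_one_sub hBm]
      rw [ENNReal.sub_sub_cancel ENNReal.one_ne_top prob_le_one]
    rw [hG_def] at hGB
    rw [hGB, hB1]
    calc ENNReal.ofReal (1 - δ) ≤ 1 - ENNReal.ofReal δ := by
          refine ENNReal.le_sub_of_add_le_right ENNReal.ofReal_ne_top ?_
          rw [← ENNReal.ofReal_add (by linarith [hδ.2]) (le_of_lt hδ.1)]
          rw [show (1 - δ) + δ = 1 by ring]
          simp
      _ ≤ 1 - (Measure.pi fun _ : Fin n => ν) Bᶜ := tsub_le_tsub_left hsum 1
  · -- the bad-event inclusion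
    intro d hd _
    have hdG : d ∉ G := fun hG' => hd (subset_toMeasurable _ _ hG')
    rw [hG_def] at hdG
    simp only [Set.mem_setOf_eq, not_forall, not_le] at hdG
    obtain ⟨i, hi⟩ := hdG
    refine ⟨i, ?_⟩
    show ∑ j : Fin n, ((F i (d j).1 - (d j).2) ^ 2 - (fstar (d j).1 - (d j).2) ^ 2)
        < (n : ℝ) * r i / 3 - L
    rw [Finset.sum_sub_distrib]
    have hi' : 3 * (∑ j : Fin n, (F i (d j).1 - (d j).2) ^ 2
        - ∑ j : Fin n, (fstar (d j).1 - (d j).2) ^ 2 + L) < (n : ℝ) * r i := hi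
    linarith
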